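/- Let $p_1,\ldots,p_n$ be distinct primes with $n\geq 3$, and $N,N'\in\mathbb{N}$. Define in $\mathbb{Q}^\times\times\mathbb{Q}^\times$ the elements $\lambda=(1,p_1^N)$, $\lambda'=(p_n^{N'},1)$, $\lambda_1=(p_1,1)$, $\lambda_i=(p_i,p_{i-1})$ for $2\leq i\leq n$, $\lambda_{n+1}=(1,p_n)$. Then the $n+3$ elements $\lambda,\lambda_1,\ldots,\lambda_{n+1},\lambda'$ are linearly independent over $\mathbb{Z}$ (i.e., no nontrivial integer combination of exponents gives the identity). -/

import Mathlib

lemma padicValRat_zpow (p : ℕ) [Fact p.Prime] {x : ℚ} (hx : x ≠ 0) (k : ℤ) :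
    padicValRat p (x ^ k) = k * padicValRat p x := by
  rcases k with n | n
  · rw [Int.ofNat_eq_coe, zpow_natCast, padicValRat.pow x]
  · rw [zpow_negSucc, padicValRat.inv, padicValRat.pow x]
    rw [Int.negSucc_eq]; push_cast; ring

lemma padicValRat_prod (p : ℕ) [Fact p.Prime] {ι : Type*} (s : Finset ι) (f : ι → ℚ)
    (hf : ∀ i ∈ s, f i ≠ 0) :
    padicValRat p (∏ i ∈ s, f i) = ∑ i ∈ s, padicValRat p (f i) := by
  classical
  induction s using Finset.induction with
  | empty => simp
  | insert _ _ hi ih =>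
    rename_i b s'
    rw [Finset.prod_insert hi, Finset.sum_insert hi,
      padicValRat.mul (hf b (Finset.mem_insert_self _ _))
        (Finset.prod_ne_zero_iff.2 fun i hi' => hf i (Finset.mem_insert_of_mem hi')),
      ih fun i hi' => hf i (Finset.mem_insert_of_mem hi')]

lemma primes_zpow_indep {m : ℕ} (q : Fin m → ℕ) (hq : ∀ i, (q i).Prime)
    (hinj : Function.Injective q) (e : Fin m → ℤ)
    (h : ∏ i, (q i : ℚ) ^ (e i) = 1) : ∀ k, e k = 0 := by
  intro k
  haveI : Fact (q k).Prime := ⟨hq k⟩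
  have hne : ∀ i, ((q i : ℚ)) ≠ 0 := fun i => by exact_mod_cast (hq i).ne_zero
  have hval := congrArg (padicValRat (q k)) h
  rw [padicValRat_prod _ _ _ (fun i _ => zpow_ne_zero _ (hne i)),
    Finset.sum_congr rfl (fun i _ => padicValRat_zpow (q k) (hne i) (e i))] at hval
  have hterm : ∀ i : Fin m, e i * padicValRat (q k) (q i)
      = if i = k then e i else 0 := by
    intro i
    by_cases hik : i = k
    · subst hik
      rw [padicValRat.self (hq i).one_lt]
      simp
    · haveI : Fact (q i).Prime := ⟨hq i⟩
      rw [if_neg hik, padicValRat.of_nat,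
        padicValNat_primes (fun hh => hik (hinj hh.symm))]
      simp
  rw [Finset.sum_congr rfl (fun i _ => hterm i), Finset.sum_ite_eq' _ k] at hval
  simpa using hval



/-- Let `q 0, …, q (n+2)` be distinct primes (family of size `n+3 ≥ 3`),
`N, N' ≥ 1`. In `ℚ^× × ℚ^×` the `n+6` elements `λ = (1, q₀ᴺ)`, `λ₁ = (q₀,1)`,
`λ_{j+1} = (q_j, q_{j-1})` for `1 ≤ j ≤ n+2`, `λ_{n+4} = (1, q_{n+2})`,
`λ' = (q_{n+2}^{N'}, 1)` are linearly independent over `ℤ`: if an integer-exponent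
product `λ^a · λ₁^{R₀} ⋯ λ_{n+4}^{R_{n+3}} · λ'^{a'}` equals `(1,1)` (written here
componentwise in `ℚ` with `zpow`), then all exponents vanish. -/
theorem wild_generators_linear_independent (n : ℕ) (q : Fin (n + 3) → ℕ)
    (hq : ∀ i, (q i).Prime) (hinj : Function.Injective q)
    (N N' : ℕ) (hN : 1 ≤ N) (hN' : 1 ≤ N')
    (a a' : ℤ) (R : Fin (n + 4) → ℤ)
    (h1 : (q (Fin.last (n + 2)) : ℚ) ^ ((N' : ℤ) * a') *
        ∏ i : Fin (n + 3), (q i : ℚ) ^ (R i.castSucc) = 1)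
    (h2 : (q 0 : ℚ) ^ ((N : ℤ) * a) *
        ∏ i : Fin (n + 3), (q i : ℚ) ^ (R i.succ) = 1) :
    a = 0 ∧ a' = 0 ∧ ∀ j, R j = 0 := by
  have hne : ∀ i, ((q i : ℚ)) ≠ 0 := fun i => by exact_mod_cast (hq i).ne_zero
  have h1' : ∏ i : Fin (n+3), (q i : ℚ) ^
      (R i.castSucc + if i = Fin.last (n+2) then (N' : ℤ) * a' else 0) = 1 := by
    rw [← h1]
    rw [Finset.prod_congr rfl (fun i _ => zpow_add₀ (hne i) _ _), Finset.prod_mul_distrib,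
      mul_comm]
    congr 1
    have : ∀ i : Fin (n+3), (q i : ℚ) ^ (if i = Fin.last (n+2) then (N' : ℤ) * a' else 0)
        = if i = Fin.last (n+2) then (q i : ℚ) ^ ((N' : ℤ) * a') else 1 := by
      intro i; split <;> simp
    rw [Finset.prod_congr rfl (fun i _ => this i), Finset.prod_ite_eq' _ _
      (fun i => (q i : ℚ) ^ ((N' : ℤ) * a'))]
    simp
  have h2' : ∏ i : Fin (n+3), (q i : ℚ) ^
      (R i.succ + if i = 0 then (N : ℤ) * a else 0) = 1 := by
    rw [← h2]
    rw [Finset.prod_congr rfl (fun i _ => zpow_add₀ (hne i) _ _), Finset.prod_mul_distrib,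
      mul_comm]
    congr 1
    have : ∀ i : Fin (n+3), (q i : ℚ) ^ (if i = 0 then (N : ℤ) * a else 0)
        = if i = 0 then (q i : ℚ) ^ ((N : ℤ) * a) else 1 := by
      intro i; split <;> simp
    rw [Finset.prod_congr rfl (fun i _ => this i), Finset.prod_ite_eq' _ _
      (fun i => (q i : ℚ) ^ ((N : ℤ) * a))]
    simp
  have key1 := primes_zpow_indep q hq hinj _ h1'
  have key2 := primes_zpow_indep q hq hinj _ h2'
  -- R of castSucc of non-last indices vanish
  have hR1 : ∀ i : Fin (n+3), i ≠ Fin.last (n+2) → R i.castSucc = 0 := by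
    intro i hi; have := key1 i; rwa [if_neg hi, add_zero] at this
  have hR2 : ∀ i : Fin (n+3), i ≠ 0 → R i.succ = 0 := by
    intro i hi; have := key2 i; rwa [if_neg hi, add_zero] at this
  -- all R j = 0
  have hRall : ∀ j : Fin (n+4), R j = 0 := by
    intro j
    by_cases hj : (j : ℕ) ≤ n + 1
    · have hlt : (j : ℕ) < n + 3 := by omega
      have : j = (⟨(j : ℕ), hlt⟩ : Fin (n+3)).castSucc := by
        apply Fin.ext; simp
      rw [this]
      apply hR1
      intro hc
      have := congrArg Fin.val hc
      simp [Fin.last] at this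
      omega
    · have hlt : (j : ℕ) - 1 < n + 3 := by omega
      have : j = (⟨(j : ℕ) - 1, hlt⟩ : Fin (n+3)).succ := by
        apply Fin.ext; simp; omega
      rw [this]
      apply hR2
      intro hc
      have := congrArg Fin.val hc
      simp at this
      omega
  refine ⟨?_, ?_, hRall⟩
  · have := key2 0
    rw [if_pos rfl, hRall _] at this
    have hNa : (N : ℤ) * a = 0 := by omega
    rcases mul_eq_zero.1 hNa with h | h
    · exfalso; have : (N : ℤ) ≠ 0 := by positivity
      exact this h
    · exact h
  · have := key1 (Fin.last (n+2))
    rw [if_pos rfl, hRall _] at this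
    have hNa : (N' : ℤ) * a' = 0 := by omega
    rcases mul_eq_zero.1 hNa with h | h
    · exfalso; have : (N' : ℤ) ≠ 0 := by positivity
      exact this h
    · exact h
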